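/- One-step descent inequality for FLAG: Let F : ℝ^d → ℝ be differentiable with ν-Lipschitz gradient (ν > 0), let θ ∈ ℝ^d, let N be a positive integer, let η > 0, and let G be a square-integrable random vector in ℝ^d satisfying E[G] = N·∇F(θ) and E[‖G‖²] ≤ N²·‖∇F(θ)‖² + N·σ²/B + d·N·C²/2^{2b}, where σ, C ≥ 0, B ≥ 1 and b ≥ 1. Then E[F(θ − (η/N)·G)] ≤ F(θ) + (−η + ν·η²/2)·‖∇F(θ)‖² + ν·η²·σ²/(2·B·N) + d·ν·η²·C²/(2·2^{2b}·N). In particular, if η ≤ 1/ν, then E[F(θ − (η/N)·G)] ≤ F(θ) − (η/2)·‖∇F(θ)‖² + η·σ²/(2·B·N) + d·η·C²/(2·2^{2b}·N). -/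

import Mathlib

open MeasureTheory
set_option maxHeartbeats 1000000

lemma descent_aux {d : ℕ} (F : EuclideanSpace ℝ (Fin d) → ℝ) (ν : ℝ) (hν : 0 ≤ ν)
    (hF : Differentiable ℝ F)
    (hlip : ∀ x y, ‖gradient F x - gradient F y‖ ≤ ν * ‖x - y‖)
    (x y : EuclideanSpace ℝ (Fin d)) :
    |F y - F x - inner ℝ (gradient F x) (y - x)| ≤ ν / 2 * ‖y - x‖ ^ 2 := by
  set c : ℝ → EuclideanSpace ℝ (Fin d) := fun t => x + t • (y - x) with hc
  have hcderiv : ∀ t : ℝ, HasDerivAt c (y - x) t := by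
    intro t
    rw [hc]
    simpa using ((hasDerivAt_id t).smul_const (y - x)).const_add x
  have hgrad_cont : Continuous (gradient F) := by
    have : LipschitzWith (Real.toNNReal ν) (gradient F) := by
      apply LipschitzWith.of_dist_le_mul
      intro a b
      rw [dist_eq_norm, dist_eq_norm]
      simpa [Real.coe_toNNReal ν hν] using hlip a b
    exact this.continuous
  have hφderiv : ∀ t : ℝ, HasDerivAt (fun t => F (c t))
      ((inner ℝ (gradient F (c t)) (y - x) : ℝ)) t := by
    intro t
    have h1 : HasFDerivAt F ((InnerProductSpace.toDual ℝ _) (gradient F (c t))) (c t) :=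
      (hasGradientAt_iff_hasFDerivAt.mp (hF (c t)).hasGradientAt)
    exact h1.comp_hasDerivAt t (hcderiv t)
  have hcont : Continuous fun t : ℝ => (inner ℝ (gradient F (c t)) (y - x) : ℝ) := by
    apply Continuous.inner
    · exact hgrad_cont.comp (continuous_const.add (continuous_id.smul continuous_const))
    · exact continuous_const
  have hftc : ∫ t in (0:ℝ)..1, (inner ℝ (gradient F (c t)) (y - x) : ℝ)
      = F (c 1) - F (c 0) :=
    intervalIntegral.integral_eq_sub_of_hasDerivAt (fun t _ => hφderiv t)
      (hcont.intervalIntegrable 0 1)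
  have hc0 : c 0 = x := by simp [hc]
  have hc1 : c 1 = y := by simp [hc]
  rw [hc0, hc1] at hftc
  have key : F y - F x - inner ℝ (gradient F x) (y - x)
      = ∫ t in (0:ℝ)..1, (inner ℝ (gradient F (c t) - gradient F x) (y - x) : ℝ) := by
    have h2 : ∫ t in (0:ℝ)..1, (inner ℝ (gradient F x) (y - x) : ℝ)
        = inner ℝ (gradient F x) (y - x) := by simp
    rw [← hftc, ← h2, ← intervalIntegral.integral_sub (hcont.intervalIntegrable 0 1)
      (intervalIntegrable_const)]
    congr 1
    ext t
    rw [inner_sub_left]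
  rw [key]
  have hbound : ∀ t ∈ Set.Icc (0:ℝ) 1,
      |(inner ℝ (gradient F (c t) - gradient F x) (y - x) : ℝ)| ≤ ν * t * ‖y - x‖ ^ 2 := by
    intro t ht
    calc |(inner ℝ (gradient F (c t) - gradient F x) (y - x) : ℝ)|
        ≤ ‖gradient F (c t) - gradient F x‖ * ‖y - x‖ := abs_real_inner_le_norm _ _
      _ ≤ (ν * ‖c t - x‖) * ‖y - x‖ := by
          apply mul_le_mul_of_nonneg_right (hlip _ _) (norm_nonneg _)
      _ = ν * t * ‖y - x‖ ^ 2 := by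
          have : ‖c t - x‖ = t * ‖y - x‖ := by
            simp [hc, norm_smul, abs_of_nonneg ht.1]
          rw [this]; ring
  have hcont2 : Continuous fun t : ℝ =>
      (inner ℝ (gradient F (c t) - gradient F x) (y - x) : ℝ) := by
    apply Continuous.inner
    · exact (hgrad_cont.comp (continuous_const.add (continuous_id.smul continuous_const))).sub continuous_const
    · exact continuous_const
  calc |∫ t in (0:ℝ)..1, (inner ℝ (gradient F (c t) - gradient F x) (y - x) : ℝ)|
      ≤ ∫ t in (0:ℝ)..1, |(inner ℝ (gradient F (c t) - gradient F x) (y - x) : ℝ)| :=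
        intervalIntegral.abs_integral_le_integral_abs zero_le_one
    _ ≤ ∫ t in (0:ℝ)..1, ν * t * ‖y - x‖ ^ 2 :=
        intervalIntegral.integral_mono_on zero_le_one
          (hcont2.abs.intervalIntegrable 0 1)
          (Continuous.intervalIntegrable ((continuous_const.mul continuous_id).mul continuous_const) 0 1) hbound
    _ = ν / 2 * ‖y - x‖ ^ 2 := by
        have heq : (fun t : ℝ => ν * t * ‖y - x‖ ^ 2)
            = fun t : ℝ => (ν * ‖y - x‖ ^ 2) * t := by ext t; ring
        rw [heq, intervalIntegral.integral_const_mul, integral_id]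
        ring

theorem flag_one_step_descent {Ω : Type*} [MeasurableSpace Ω]
    (μ : Measure Ω) [IsProbabilityMeasure μ]
    (d : ℕ) (F : EuclideanSpace ℝ (Fin d) → ℝ) (ν : ℝ) (hν : 0 < ν)
    (hF : Differentiable ℝ F)
    (hlip : ∀ x y, ‖gradient F x - gradient F y‖ ≤ ν * ‖x - y‖)
    (θ : EuclideanSpace ℝ (Fin d)) (N : ℕ) (hN : 0 < N) (η : ℝ) (hη : 0 < η)
    (σ C : ℝ) (hσ : 0 ≤ σ) (hC : 0 ≤ C) (B b : ℕ) (hB : 1 ≤ B) (hb : 1 ≤ b)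
    (G : Ω → EuclideanSpace ℝ (Fin d)) (hL2 : MemLp G 2 μ)
    (hmean : ∫ ω, G ω ∂μ = (N : ℝ) • gradient F θ)
    (hsecond : ∫ ω, ‖G ω‖ ^ 2 ∂μ
      ≤ (N : ℝ) ^ 2 * ‖gradient F θ‖ ^ 2 + N * σ ^ 2 / B + d * N * C ^ 2 / 2 ^ (2 * b)) :
    (∫ ω, F (θ - (η / N) • G ω) ∂μ)
      ≤ F θ + (-η + ν * η ^ 2 / 2) * ‖gradient F θ‖ ^ 2
        + ν * η ^ 2 * σ ^ 2 / (2 * B * N) + d * ν * η ^ 2 * C ^ 2 / (2 * 2 ^ (2 * b) * N) ∧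
    (η ≤ 1 / ν →
      (∫ ω, F (θ - (η / N) • G ω) ∂μ)
        ≤ F θ - (η / 2) * ‖gradient F θ‖ ^ 2
          + η * σ ^ 2 / (2 * B * N) + d * η * C ^ 2 / (2 * 2 ^ (2 * b) * N)) := by
  set g := gradient F θ with hg
  set s : ℝ := η / N with hs
  have hNpos : (0:ℝ) < N := by exact_mod_cast hN
  have hBpos : (0:ℝ) < B := by exact_mod_cast lt_of_lt_of_le one_pos (by exact_mod_cast hB)
  have hspos : 0 < s := div_pos hη hNpos
  have hGint : Integrable G μ := hL2.integrable (by norm_num)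
  have hnormsq : Integrable (fun ω => ‖G ω‖ ^ 2) μ :=
    (memLp_two_iff_integrable_sq_norm hL2.aestronglyMeasurable).mp hL2
  have hinner : Integrable (fun ω => (inner ℝ g (G ω) : ℝ)) μ := hGint.const_inner g
  -- pointwise bound
  have hptw : ∀ ω, |F (θ - s • G ω) - F θ + s * inner ℝ g (G ω)|
      ≤ ν / 2 * s ^ 2 * ‖G ω‖ ^ 2 := by
    intro ω
    have h := descent_aux F ν hν.le hF hlip θ (θ - s • G ω)
    have h1 : θ - s • G ω - θ = -(s • G ω) := by abel
    rw [h1] at h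
    rw [inner_neg_right, real_inner_smul_right] at h
    rw [norm_neg, norm_smul, mul_pow] at h
    have h2 : ‖s‖ ^ 2 = s ^ 2 := by rw [Real.norm_eq_abs, sq_abs]
    rw [h2] at h
    calc |F (θ - s • G ω) - F θ + s * inner ℝ g (G ω)|
        = |F (θ - s • G ω) - F θ - -(s * inner ℝ g (G ω))| := by ring_nf
      _ ≤ ν / 2 * (s ^ 2 * ‖G ω‖ ^ 2) := h
      _ = ν / 2 * s ^ 2 * ‖G ω‖ ^ 2 := by ring
  have hrmeas : AEStronglyMeasurable (fun ω => F (θ - s • G ω)) μ :=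
    hF.continuous.comp_aestronglyMeasurable
      (aestronglyMeasurable_const.sub (hGint.aestronglyMeasurable.const_smul s))
  have hrint : Integrable (fun ω => F (θ - s • G ω)) μ := by
    apply Integrable.mono' (g := fun ω => |F θ| + s * |(inner ℝ g (G ω) : ℝ)|
        + ν / 2 * s ^ 2 * ‖G ω‖ ^ 2)
      (((integrable_const _).add ((hinner.abs).const_mul s)).add
        (hnormsq.const_mul (ν / 2 * s ^ 2))) hrmeas
    filter_upwards with ω
    have h := hptw ω
    rw [abs_le] at h
    rw [Real.norm_eq_abs, abs_le]
    constructor <;>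
      nlinarith [le_abs_self (F θ), neg_abs_le (F θ),
        le_abs_self (inner ℝ g (G ω) : ℝ), neg_abs_le (inner ℝ g (G ω) : ℝ), hspos.le]
  have hupperint : Integrable (fun ω => F θ - s * (inner ℝ g (G ω) : ℝ)
      + ν / 2 * s ^ 2 * ‖G ω‖ ^ 2) μ :=
    ((integrable_const _).sub (hinner.const_mul s)).add (hnormsq.const_mul (ν / 2 * s ^ 2))
  have hmono : (∫ ω, F (θ - s • G ω) ∂μ)
      ≤ ∫ ω, (F θ - s * (inner ℝ g (G ω) : ℝ) + ν / 2 * s ^ 2 * ‖G ω‖ ^ 2) ∂μ := by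
    apply integral_mono hrint hupperint
    intro ω
    have h := hptw ω
    rw [abs_le] at h
    linarith [h.2]
  have hcomp : (∫ ω, (F θ - s * (inner ℝ g (G ω) : ℝ) + ν / 2 * s ^ 2 * ‖G ω‖ ^ 2) ∂μ)
      = F θ - s * N * ‖g‖ ^ 2 + ν / 2 * s ^ 2 * ∫ ω, ‖G ω‖ ^ 2 ∂μ := by
    have hint1 : Integrable (fun ω => F θ - s * (inner ℝ g (G ω) : ℝ)) μ :=
      (integrable_const _).sub (hinner.const_mul s)
    have hint2 : Integrable (fun ω => ν / 2 * s ^ 2 * ‖G ω‖ ^ 2) μ :=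
      hnormsq.const_mul _
    rw [integral_add hint1 hint2,
      integral_sub (integrable_const _) (hinner.const_mul s),
      integral_const, integral_const_mul, integral_const_mul,
      integral_inner hGint g, hmean, real_inner_smul_right, real_inner_self_eq_norm_sq]
    simp
    ring
  have hI : (∫ ω, F (θ - s • G ω) ∂μ)
      ≤ F θ - s * N * ‖g‖ ^ 2 + ν / 2 * s ^ 2
          * ((N : ℝ) ^ 2 * ‖g‖ ^ 2 + N * σ ^ 2 / B + d * N * C ^ 2 / 2 ^ (2 * b)) := by
    rw [hcomp] at hmono
    have hc : 0 ≤ ν / 2 * s ^ 2 := by positivity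
    nlinarith [mul_le_mul_of_nonneg_left hsecond hc]
  have heq : F θ - s * N * ‖g‖ ^ 2 + ν / 2 * s ^ 2
        * ((N : ℝ) ^ 2 * ‖g‖ ^ 2 + N * σ ^ 2 / B + d * N * C ^ 2 / 2 ^ (2 * b))
      = F θ + (-η + ν * η ^ 2 / 2) * ‖g‖ ^ 2
        + ν * η ^ 2 * σ ^ 2 / (2 * B * N) + d * ν * η ^ 2 * C ^ 2 / (2 * 2 ^ (2 * b) * N) := by
    rw [hs]
    have h2b : (0:ℝ) < 2 ^ (2 * b) := by positivity
    field_simp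
    ring
  have first : (∫ ω, F (θ - s • G ω) ∂μ)
      ≤ F θ + (-η + ν * η ^ 2 / 2) * ‖g‖ ^ 2
        + ν * η ^ 2 * σ ^ 2 / (2 * B * N) + d * ν * η ^ 2 * C ^ 2 / (2 * 2 ^ (2 * b) * N) := by
    rw [← heq]; exact hI
  refine ⟨first, fun hη2 => ?_⟩
  have hνη : ν * η ≤ 1 := by
    rw [le_div_iff₀ hν] at hη2; linarith
  have t1 : (-η + ν * η ^ 2 / 2) * ‖g‖ ^ 2 ≤ (-(η / 2)) * ‖g‖ ^ 2 := by
    apply mul_le_mul_of_nonneg_right _ (sq_nonneg _)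
    nlinarith
  have hden1 : (0:ℝ) < 2 * B * N := by positivity
  have hden2 : (0:ℝ) < 2 * 2 ^ (2 * b) * N := by positivity
  have t2 : ν * η ^ 2 * σ ^ 2 / (2 * B * N) ≤ η * σ ^ 2 / (2 * B * N) := by
    rw [div_le_div_iff_of_pos_right hden1]
    have := mul_nonneg (mul_nonneg hη.le (sq_nonneg σ)) (sub_nonneg.mpr hνη)
    nlinarith
  have t3 : (d : ℝ) * ν * η ^ 2 * C ^ 2 / (2 * 2 ^ (2 * b) * N)
      ≤ d * η * C ^ 2 / (2 * 2 ^ (2 * b) * N) := by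
    rw [div_le_div_iff_of_pos_right hden2]
    have hd : (0:ℝ) ≤ d := Nat.cast_nonneg d
    have := mul_nonneg (mul_nonneg (mul_nonneg hd hη.le) (sq_nonneg C)) (sub_nonneg.mpr hνη)
    nlinarith
  linarith [first, t1, t2, t3]
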